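/- For any CDS instance whose minimum connected edge cover number ρ is finite, every linear CDS scheme for that instance with secret length L and signal length N satisfies ρ·L ≤ (ρ−1)·N; equivalently, the linear rate L/(2N) is at most (ρ−1)/(2ρ). -/

import Mathlib

open Matrix

/-- The row space of a matrix: the span of its rows in `Fin LZ → F`. -/
noncomputable def rowSpan {F : Type} [Field F] {N LZ : ℕ}
    (H : Matrix (Fin N) (Fin LZ) F) : Submodule F (Fin LZ → F) :=
  Submodule.span F (Set.range H)

/-- Linear correctness condition for a (qualified) pair of nodes. -/
def CorrectPair (F : Type) [Field F] (L N LZ : ℕ)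
    (Fv Fu : Matrix (Fin N) (Fin L) F) (Hv Hu : Matrix (Fin N) (Fin LZ) F) : Prop :=
  ∀ (k : ℕ) (Pv Pu : Matrix (Fin k) (Fin N) F),
    Pv * Hv = Pu * Hu →
    Pv.rank = Module.finrank F ↥(rowSpan Hv ⊓ rowSpan Hu) →
    Pu.rank = Module.finrank F ↥(rowSpan Hv ⊓ rowSpan Hu) →
    (Pv * Fv - Pu * Fu).rank = L

/-- Linear security condition for an (unqualified) pair of nodes. -/
def SecurePair (F : Type) [Field F] (L N LZ : ℕ)
    (Fv Fu : Matrix (Fin N) (Fin L) F) (Hv Hu : Matrix (Fin N) (Fin LZ) F) : Prop :=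
  ∀ (k : ℕ) (Pv Pu : Matrix (Fin k) (Fin N) F),
    Pv * Hv = Pu * Hu → Pv * Fv = Pu * Fu

/-- A CDS instance: a bipartite graph with qualified and unqualified edges. -/
structure CDSInstance (V : Type) where
  isA : V → Prop
  qual : V → V → Prop
  unqual : V → V → Prop
  qual_symm : ∀ v u, qual v u → qual u v
  unqual_symm : ∀ v u, unqual v u → unqual u v
  qual_bip : ∀ v u, qual v u → (isA v ↔ ¬ isA u)
  unqual_bip : ∀ v u, unqual v u → (isA v ↔ ¬ isA u)

/-- An unqualified path: a list of nodes joined consecutively by unqualified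
edges, with all the (unordered) edges distinct. -/
def IsUnqualPath {V : Type} (I : CDSInstance V) (P : List V) : Prop :=
  2 ≤ P.length ∧ P.Chain' I.unqual ∧
    (List.zipWith (fun a b => s(a, b)) P P.tail).Nodup

/-- An unordered edge all of whose representatives are qualified. -/
def IsQualEdge {V : Type} (I : CDSInstance V) (e : Sym2 V) : Prop :=
  ∃ a b, e = s(a, b) ∧ I.qual a b

/-- A connected edge cover `M` of the node set of an unqualified path `P`, with
respect to an internal qualified edge `{a, b}` of `P`. -/
def IsConnCover {V : Type} (I : CDSInstance V) (a b : V) (P : List V)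
    (M : Finset (Sym2 V)) : Prop :=
  s(a, b) ∈ M ∧
  (∀ e ∈ M, IsQualEdge I e) ∧
  (∀ x y : V, (∃ e ∈ M, x ∈ e) → (∃ e ∈ M, y ∈ e) →
      Relation.ReflTransGen (fun w z => s(w, z) ∈ M) x y) ∧
  (∀ v ∈ P, ∃ e ∈ M, v ∈ e)

/-- `ρ(e, P)`: the minimum size of a connected edge cover (`+∞` if none exists). -/
noncomputable def rhoEP {V : Type} (I : CDSInstance V) (a b : V) (P : List V) : ℕ∞ :=
  sInf ((fun M : Finset (Sym2 V) => (M.card : ℕ∞)) '' {M | IsConnCover I a b P M})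

/-- `ρ`: the minimum of `ρ(e, P)` over all internal qualified edges `e` of
unqualified paths `P`. -/
noncomputable def rho {V : Type} (I : CDSInstance V) : ℕ∞ :=
  sInf {x : ℕ∞ | ∃ a b P, IsUnqualPath I P ∧ I.qual a b ∧ a ∈ P ∧ b ∈ P ∧
    x = rhoEP I a b P}

/-- A linear CDS scheme for a CDS instance. -/
def IsLinearCDSScheme {V : Type} (F : Type) [Field F] (L N LZ : ℕ) (I : CDSInstance V)
    (Fm : V → Matrix (Fin N) (Fin L) F) (Hm : V → Matrix (Fin N) (Fin LZ) F) : Prop :=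
  (∀ v, (Hm v).rank = N) ∧
  (∀ v u, I.qual v u → CorrectPair F L N LZ (Fm v) (Fm u) (Hm v) (Hm u)) ∧
  (∀ v u, I.unqual v u → SecurePair F L N LZ (Fm v) (Fm u) (Hm v) (Hm u))

namespace CDSAux

open Module Submodule

variable {F : Type} [Field F] {L N LZ : ℕ}

lemma rowSpan_eq_range (H : Matrix (Fin N) (Fin LZ) F) :
    rowSpan H = LinearMap.range H.vecMulLinear := (range_vecMulLinear H).symm

lemma finrank_rowSpan (H : Matrix (Fin N) (Fin LZ) F) :
    Module.finrank F ↥(rowSpan H) = H.rank := (H.rank_eq_finrank_span_row).symm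

lemma vecMulLinear_inj (H : Matrix (Fin N) (Fin LZ) F) (h : H.rank = N) :
    Function.Injective H.vecMulLinear := by
  rw [← LinearMap.ker_eq_bot]
  have h1 := LinearMap.finrank_range_add_finrank_ker H.vecMulLinear
  rw [← rowSpan_eq_range, finrank_rowSpan, h] at h1
  simp only [Module.finrank_pi, Fintype.card_fin] at h1
  have h2 : Module.finrank F ↥(LinearMap.ker H.vecMulLinear) = 0 := by omega
  exact Submodule.finrank_eq_zero.mp h2

/-- The linear equivalence `F^N ≃ rowSpan H` for a full-row-rank `H`. -/
noncomputable def rEq (H : Matrix (Fin N) (Fin LZ) F) (h : H.rank = N) :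
    (Fin N → F) ≃ₗ[F] ↥(rowSpan H) :=
  (LinearEquiv.ofInjective H.vecMulLinear (vecMulLinear_inj H h)).trans
    (LinearEquiv.ofEq _ _ (rowSpan_eq_range H).symm)

lemma rEq_apply (H : Matrix (Fin N) (Fin LZ) F) (h : H.rank = N) (p : Fin N → F) :
    (rEq H h p : Fin LZ → F) = p ᵥ* H := by
  simp [rEq, LinearEquiv.trans_apply]

lemma rEq_symm_spec (H : Matrix (Fin N) (Fin LZ) F) (h : H.rank = N)
    (w : ↥(rowSpan H)) : ((rEq H h).symm w) ᵥ* H = (w : Fin LZ → F) := by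
  have h2 := congrArg (Subtype.val) ((rEq H h).apply_symm_apply w)
  rwa [rEq_apply] at h2





open Module Submodule

variable {F : Type} [Field F] {L N LZ : ℕ}

lemma mul_row (k : ℕ) (A : Matrix (Fin k) (Fin N) F) (B : Matrix (Fin N) (Fin LZ) F)
    (i : Fin k) : (A * B) i = A i ᵥ* B := by
  funext j
  simp [Matrix.mul_apply, Matrix.vecMul, dotProduct]

/-- The difference map `w ↦ φ_a(w) - φ_b(w)` on the intersection of row spaces. -/
noncomputable def psiMap (Fa Fb : Matrix (Fin N) (Fin L) F)
    (Ha Hb : Matrix (Fin N) (Fin LZ) F) (ha : Ha.rank = N) (hb : Hb.rank = N) :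
    ↥(rowSpan Ha ⊓ rowSpan Hb) →ₗ[F] (Fin L → F) :=
  (Fa.vecMulLinear ∘ₗ ((rEq Ha ha).symm.toLinearMap) ∘ₗ Submodule.inclusion inf_le_left)
  - (Fb.vecMulLinear ∘ₗ ((rEq Hb hb).symm.toLinearMap) ∘ₗ Submodule.inclusion inf_le_right)

lemma psiMap_apply (Fa Fb : Matrix (Fin N) (Fin L) F)
    (Ha Hb : Matrix (Fin N) (Fin LZ) F) (ha : Ha.rank = N) (hb : Hb.rank = N)
    (x : ↥(rowSpan Ha ⊓ rowSpan Hb)) :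
    psiMap Fa Fb Ha Hb ha hb x =
      ((rEq Ha ha).symm ⟨(x : Fin LZ → F), x.2.1⟩) ᵥ* Fa
      - ((rEq Hb hb).symm ⟨(x : Fin LZ → F), x.2.2⟩) ᵥ* Fb := by
  simp [psiMap, Submodule.inclusion, Matrix.vecMulLinear_apply]
  rfl

lemma psiMap_surj (Fa Fb : Matrix (Fin N) (Fin L) F)
    (Ha Hb : Matrix (Fin N) (Fin LZ) F) (ha : Ha.rank = N) (hb : Hb.rank = N)
    (hC : CorrectPair F L N LZ Fa Fb Ha Hb) :
    Function.Surjective (psiMap Fa Fb Ha Hb ha hb) := by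
  classical
  set W := rowSpan Ha ⊓ rowSpan Hb with hW
  set d := Module.finrank F ↥W with hd
  let β : Basis (Fin d) F ↥W := Module.finBasis F ↥W
  let Pv : Matrix (Fin d) (Fin N) F :=
    Matrix.of fun i => (rEq Ha ha).symm (Submodule.inclusion inf_le_left (β i))
  let Pu : Matrix (Fin d) (Fin N) F :=
    Matrix.of fun i => (rEq Hb hb).symm (Submodule.inclusion inf_le_right (β i))
  let B : Matrix (Fin d) (Fin LZ) F := Matrix.of fun i => ((β i : Fin LZ → F))
  have hrv : ∀ i, Pv i ᵥ* Ha = ((β i : Fin LZ → F)) := by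
    intro i
    exact rEq_symm_spec Ha ha _
  have hru : ∀ i, Pu i ᵥ* Hb = ((β i : Fin LZ → F)) := by
    intro i
    exact rEq_symm_spec Hb hb _
  have hPvHa : Pv * Ha = B := by
    funext i j
    rw [mul_row]
    exact congrFun (hrv i) j
  have hPuHb : Pu * Hb = B := by
    funext i j
    rw [mul_row]
    exact congrFun (hru i) j
  have hBrank : B.rank = d := by
    rw [B.rank_eq_finrank_span_row]
    have h1 : Set.range (B : Fin d → (Fin LZ → F)) = Subtype.val '' Set.range β := by
      rw [← Set.range_comp]; rfl
    change Module.finrank F ↥(Submodule.span F (Set.range (B : Fin d → (Fin LZ → F)))) = d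
    rw [h1, show (Subtype.val '' Set.range ⇑β) = (⇑W.subtype '' Set.range ⇑β) from rfl,
      Submodule.span_image, Basis.span_eq, Submodule.map_top, Submodule.range_subtype]
  have hPvrank : Pv.rank = d := by
    refine le_antisymm (Pv.rank_le_height) ?_
    calc d = B.rank := hBrank.symm
    _ = (Pv * Ha).rank := by rw [hPvHa]
    _ ≤ Pv.rank := Matrix.rank_mul_le_left Pv Ha
  have hPurank : Pu.rank = d := by
    refine le_antisymm (Pu.rank_le_height) ?_
    calc d = B.rank := hBrank.symm
    _ = (Pu * Hb).rank := by rw [hPuHb]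
    _ ≤ Pu.rank := Matrix.rank_mul_le_left Pu Hb
  have hD := hC d Pv Pu (hPvHa.trans hPuHb.symm) hPvrank hPurank
  set Dm := Pv * Fa - Pu * Fb with hDm
  have hrow : ∀ i, Dm i = psiMap Fa Fb Ha Hb ha hb (β i) := by
    intro i
    rw [psiMap_apply]
    funext j
    simp only [hDm, Matrix.sub_apply, Pi.sub_apply]
    rw [show (Pv * Fa) i j - (Pu * Fb) i j =
      ((Pv * Fa) i - (Pu * Fb) i) j from rfl, mul_row, mul_row]
    rfl
  have hspan : Submodule.span F (Set.range Dm) ≤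
      LinearMap.range (psiMap Fa Fb Ha Hb ha hb) := by
    rw [Submodule.span_le]
    rintro x ⟨i, rfl⟩
    exact ⟨β i, (hrow i).symm⟩
  have hfr : Module.finrank F ↥(Submodule.span F (Set.range Dm)) = L := by
    have := Dm.rank_eq_finrank_span_row
    rw [hD] at this
    exact this.symm
  have hge : L ≤ Module.finrank F ↥(LinearMap.range (psiMap Fa Fb Ha Hb ha hb)) := by
    have := Submodule.finrank_mono hspan
    omega
  have hle : Module.finrank F ↥(LinearMap.range (psiMap Fa Fb Ha Hb ha hb))
      ≤ L := by
    have := Submodule.finrank_le (LinearMap.range (psiMap Fa Fb Ha Hb ha hb))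
    simpa using this
  rw [← LinearMap.range_eq_top]
  apply Submodule.eq_top_of_finrank_eq
  simp only [Module.finrank_pi, Fintype.card_fin]
  omega



lemma sec_spec (Fv Fu : Matrix (Fin N) (Fin L) F)
    (Hv Hu : Matrix (Fin N) (Fin LZ) F) (hv : Hv.rank = N) (hu : Hu.rank = N)
    (hS : SecurePair F L N LZ Fv Fu Hv Hu) (w : Fin LZ → F)
    (hwv : w ∈ rowSpan Hv) (hwu : w ∈ rowSpan Hu) :
    ((rEq Hv hv).symm ⟨w, hwv⟩) ᵥ* Fv = ((rEq Hu hu).symm ⟨w, hwu⟩) ᵥ* Fu := by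
  set p := (rEq Hv hv).symm ⟨w, hwv⟩
  set q := (rEq Hu hu).symm ⟨w, hwu⟩
  have hp : p ᵥ* Hv = w := rEq_symm_spec Hv hv _
  have hq : q ᵥ* Hu = w := rEq_symm_spec Hu hu _
  let Pv : Matrix (Fin 1) (Fin N) F := Matrix.of fun _ => p
  let Pu : Matrix (Fin 1) (Fin N) F := Matrix.of fun _ => q
  have h1 : Pv * Hv = Pu * Hu := by
    funext i j
    rw [mul_row, mul_row]
    show (p ᵥ* Hv) j = (q ᵥ* Hu) j
    rw [hp, hq]
  have h2 := hS 1 Pv Pu h1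
  have h3 := congrFun (congrFun h2 0)
  funext j
  have h4 := h3 j
  rwa [show (Pv * Fv) 0 j = (p ᵥ* Fv) j by rw [mul_row]; rfl,
    show (Pu * Fu) 0 j = (q ᵥ* Fu) j by rw [mul_row]; rfl] at h4

/-- Values of a function constant along a chain are equal on the whole list. -/
lemma chain_const {V α : Type} (R : V → V → Prop) (Q : V → Prop) (f : V → α)
    (hf : ∀ v u, R v u → Q v → Q u → f v = f u) :
    ∀ (P : List V), P.Chain' R → (∀ v ∈ P, Q v) → ∀ x ∈ P, ∀ y ∈ P, f x = f y := by
  have aux : ∀ (cs : List V) (c : V), (c :: cs).Chain' R → (∀ v ∈ c :: cs, Q v) →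
      ∀ x ∈ c :: cs, f x = f c := by
    intro cs
    induction cs with
    | nil =>
      intro c _ _ x hx
      simp at hx; subst hx; rfl
    | cons d ds ih =>
      intro c hch hQ x hx
      have hcd : R c d := (List.isChain_cons_cons.mp hch).1
      have hch' : (d :: ds).Chain' R := (List.isChain_cons_cons.mp hch).2
      have hdc : f d = f c :=
        (hf c d hcd (hQ c (by simp)) (hQ d (by simp))).symm
      rcases List.mem_cons.mp hx with rfl | hx'
      · rfl
      · have := ih d hch' (fun v hv => hQ v (List.mem_cons_of_mem _ hv)) x hx'
        rw [this, hdc]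
  intro P hch hQ x hx y hy
  cases P with
  | nil => simp at hx
  | cons c cs =>
    rw [aux cs c hch hQ x hx, aux cs c hch hQ y hy]

/-- Along a refl-trans path from inside `T` to outside `T`, some step crosses. -/
lemma exists_crossing_step {V : Type} (Rel : V → V → Prop) (T : Set V) {x y : V}
    (h : Relation.ReflTransGen Rel x y) (hx : x ∈ T) (hy : y ∉ T) :
    ∃ w z, w ∈ T ∧ z ∉ T ∧ Rel w z := by
  revert hy
  induction h with
  | refl => exact fun hy => absurd hx hy
  | @tail b c h1 h2 ih =>
    intro hy
    by_cases hb : b ∈ T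
    · exact ⟨b, c, hb, hy, h2⟩
    · exact ih hb

lemma sym2_repr {V : Type} (e : Sym2 V) : ∃ x y, e = s(x, y) :=
  Sym2.ind (fun x y => ⟨x, y, rfl⟩) e

/-- If `S ⊊ M` and `M` is connected, some edge of `M \ S` touches a node of `S`. -/
lemma crossing_edge {V : Type} (M : Finset (Sym2 V))
    (hconn : ∀ x y : V, (∃ e ∈ M, x ∈ e) → (∃ e ∈ M, y ∈ e) →
      Relation.ReflTransGen (fun w z => s(w, z) ∈ M) x y)
    (S : Finset (Sym2 V)) (hSM : S ⊆ M) (a0 : V) (ha0 : ∃ e ∈ S, a0 ∈ e)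
    (hne : ¬ M ⊆ S) :
    ∃ e ∈ M, e ∉ S ∧ ∃ z, z ∈ e ∧ ∃ f ∈ S, z ∈ f := by
  obtain ⟨f0, hf0M, hf0S⟩ := Finset.not_subset.mp hne
  obtain ⟨x, y, rfl⟩ := sym2_repr f0
  by_cases hx : ∃ g ∈ S, x ∈ g
  · exact ⟨s(x, y), hf0M, hf0S, x, Sym2.mem_mk_left x y, hx⟩
  · obtain ⟨e0, he0S, ha0e⟩ := ha0
    have h1 : ∃ e ∈ M, a0 ∈ e := ⟨e0, hSM he0S, ha0e⟩
    have h2 : ∃ e ∈ M, x ∈ e := ⟨s(x, y), hf0M, Sym2.mem_mk_left x y⟩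
    have hrtg := hconn a0 x h1 h2
    obtain ⟨w, z, hwT, hzT, hwz⟩ :=
      exists_crossing_step _ {v : V | ∃ g ∈ S, v ∈ g} hrtg ⟨e0, he0S, ha0e⟩ hx
    refine ⟨s(w, z), hwz, ?_, w, Sym2.mem_mk_left w z, hwT⟩
    intro hmem
    exact hzT ⟨s(w, z), hmem, Sym2.mem_mk_right w z⟩



set_option maxHeartbeats 1000000 in
/-- Growing a connected edge set: dimension counting. -/
lemma grow {V : Type} {F : Type} [Field F] {L N LZ : ℕ}
    (U : V → Submodule F (Fin LZ → F)) (M : Finset (Sym2 V))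
    (hdim : ∀ v, Module.finrank F ↥(U v) = N)
    (hqL : ∀ e ∈ M, ∃ p q, e = s(p, q) ∧ L ≤ Module.finrank F ↥(U p ⊓ U q))
    (hconn : ∀ x y : V, (∃ e ∈ M, x ∈ e) → (∃ e ∈ M, y ∈ e) →
      Relation.ReflTransGen (fun w z => s(w, z) ∈ M) x y)
    (a b : V) (hab : s(a, b) ∈ M) :
    (Module.finrank F ↥(U a ⊓ U b) : ℤ) ≤
      (Module.finrank F ↥(⨅ v ∈ {x : V | ∃ e ∈ M, x ∈ e}, U v) : ℤ) +
      ((M.card : ℤ) - 1) * ((N : ℤ) - (L : ℤ)) := by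
  classical
  set DS : Finset (Sym2 V) → Submodule F (Fin LZ → F) :=
    fun S => ⨅ v ∈ {x : V | ∃ e ∈ S, x ∈ e}, U v with hDS
  -- main induction
  have key : ∀ (k : ℕ) (S : Finset (Sym2 V)), S ⊆ M → s(a, b) ∈ S →
      (M \ S).card ≤ k →
      (Module.finrank F ↥(U a ⊓ U b) : ℤ) ≤
        (Module.finrank F ↥(DS S) : ℤ) + ((S.card : ℤ) - 1) * ((N : ℤ) - (L : ℤ)) →
      (Module.finrank F ↥(U a ⊓ U b) : ℤ) ≤
        (Module.finrank F ↥(DS M) : ℤ) + ((M.card : ℤ) - 1) * ((N : ℤ) - (L : ℤ)) := by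
    intro k
    induction k with
    | zero =>
      intro S hSM habS hcard hQ
      have : M \ S = ∅ := Finset.card_eq_zero.mp (Nat.le_zero.mp hcard)
      have hMS : M = S :=
        Finset.Subset.antisymm (Finset.sdiff_eq_empty_iff_subset.mp this) hSM
      rwa [hMS]
    | succ k ih =>
      intro S hSM habS hcard hQ
      by_cases hMsub : M ⊆ S
      · have hMS : M = S := Finset.Subset.antisymm hMsub hSM
        rwa [hMS]
      · obtain ⟨e, heM, heS, z, hze, f, hfS, hzf⟩ :=
          crossing_edge M hconn S hSM a ⟨s(a, b), habS, Sym2.mem_mk_left a b⟩ hMsub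
        obtain ⟨p, q, rfl, hLpq⟩ := hqL e heM
        -- z is p or q
        have hzpq : z = p ∨ z = q := Sym2.mem_iff.mp hze
        have hznode : z ∈ {x : V | ∃ g ∈ S, x ∈ g} := ⟨f, hfS, hzf⟩
        -- DS (insert e S) = (U p ⊓ U q) ⊓ DS S
        have hset : {x : V | ∃ g ∈ insert s(p, q) S, x ∈ g} =
            ({p, q} : Set V) ∪ {x : V | ∃ g ∈ S, x ∈ g} := by
          ext x
          simp only [Finset.mem_insert, Set.mem_setOf_eq, Set.mem_union,
            Set.mem_insert_iff, Set.mem_singleton_iff]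
          constructor
          · rintro ⟨g, (rfl | hgS), hxg⟩
            · rcases Sym2.mem_iff.mp hxg with rfl | rfl
              · exact Or.inl (Or.inl rfl)
              · exact Or.inl (Or.inr rfl)
            · exact Or.inr ⟨g, hgS, hxg⟩
          · rintro ((rfl | rfl) | ⟨g, hgS, hxg⟩)
            · exact ⟨s(x, q), Or.inl rfl, Sym2.mem_mk_left x q⟩
            · exact ⟨s(p, x), Or.inl rfl, Sym2.mem_mk_right p x⟩
            · exact ⟨g, Or.inr hgS, hxg⟩
        have hDSins : DS (insert s(p, q) S) = (U p ⊓ U q) ⊓ DS S := by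
          rw [hDS]
          simp only
          rw [hset, iInf_union]
          congr 1
          exact iInf_pair
        -- dimension step
        have hAz : DS S ≤ U z := by
          rw [hDS]
          exact biInf_le U hznode
        have hBz : U p ⊓ U q ≤ U z := by
          rcases hzpq with rfl | rfl
          · exact inf_le_left
          · exact inf_le_right
        have hsum := Submodule.finrank_sup_add_finrank_inf_eq (U p ⊓ U q) (DS S)
        have hsup : Module.finrank F ↥((U p ⊓ U q) ⊔ DS S) ≤ N := by
          have h1 : (U p ⊓ U q) ⊔ DS S ≤ U z := sup_le hBz hAz
          have := Submodule.finrank_mono h1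
          rw [hdim z] at this
          exact this
        have hcardins : (insert s(p, q) S).card = S.card + 1 :=
          Finset.card_insert_of_notMem heS
        have hQ' : (Module.finrank F ↥(U a ⊓ U b) : ℤ) ≤
            (Module.finrank F ↥(DS (insert s(p, q) S)) : ℤ) +
            (((insert s(p, q) S).card : ℤ) - 1) * ((N : ℤ) - (L : ℤ)) := by
          rw [hDSins, hcardins]
          push_cast
          have e1 : (Module.finrank F ↥((U p ⊓ U q) ⊔ DS S) : ℤ) +
              (Module.finrank F ↥((U p ⊓ U q) ⊓ DS S) : ℤ) =
              (Module.finrank F ↥(U p ⊓ U q) : ℤ) + (Module.finrank F ↥(DS S) : ℤ) := by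
            exact_mod_cast congrArg (Nat.cast : ℕ → ℤ) hsum
          have e2 : (Module.finrank F ↥((U p ⊓ U q) ⊔ DS S) : ℤ) ≤ (N : ℤ) :=
            by exact_mod_cast hsup
          have e3 : (L : ℤ) ≤ (Module.finrank F ↥(U p ⊓ U q) : ℤ) :=
            by exact_mod_cast hLpq
          linarith [hQ, e1, e2, e3]
        refine ih (insert s(p, q) S) (Finset.insert_subset heM hSM)
          (Finset.mem_insert_of_mem habS) ?_ hQ'
        have : M \ insert s(p, q) S = (M \ S).erase s(p, q) := by
          ext g
          simp only [Finset.mem_sdiff, Finset.mem_insert, Finset.mem_erase]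
          tauto
        rw [this]
        have hcard2 : ((M \ S).erase s(p, q)).card = (M \ S).card - 1 :=
          Finset.card_erase_of_mem (Finset.mem_sdiff.mpr ⟨heM, heS⟩)
        omega
  -- base case : S = {s(a,b)}
  have hbase : (Module.finrank F ↥(U a ⊓ U b) : ℤ) ≤
      (Module.finrank F ↥(DS {s(a, b)}) : ℤ) +
      ((({s(a, b)} : Finset (Sym2 V)).card : ℤ) - 1) * ((N : ℤ) - (L : ℤ)) := by
    have hset : {x : V | ∃ g ∈ ({s(a, b)} : Finset (Sym2 V)), x ∈ g} =
        ({a, b} : Set V) := by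
      ext x
      simp [Sym2.mem_iff]
    have hDSab : DS {s(a, b)} = U a ⊓ U b := by
      rw [hDS]
      simp only
      rw [hset]
      exact iInf_pair
    rw [hDSab]
    simp
  exact key (M \ {s(a, b)}).card {s(a, b)}
    (Finset.singleton_subset_iff.mpr hab) (Finset.mem_singleton_self _) le_rfl hbase



lemma sInf_mem_of_eq_coe {S : Set ℕ∞} {r : ℕ} (h : sInf S = (r : ℕ∞)) :
    (r : ℕ∞) ∈ S := by
  have h1 : sInf S < (r : ℕ∞) + 1 := by
    rw [h]; exact (ENat.lt_add_one_iff (ENat.coe_ne_top r)).mpr le_rfl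
  obtain ⟨x, hxS, hxlt⟩ := sInf_lt_iff.mp h1
  have hx : x = (r : ℕ∞) :=
    le_antisymm ((ENat.lt_add_one_iff (ENat.coe_ne_top r)).mp hxlt) (h ▸ sInf_le hxS)
  rwa [← hx]



end CDSAux

set_option maxHeartbeats 1600000 in
set_option synthInstance.maxHeartbeats 1000000 in
/-- **Theorem 1 (linear converse).** For any CDS instance whose minimum connected
edge cover number `ρ` is finite, every linear CDS scheme with secret length `L`
and signal length `N` satisfies `ρ·L ≤ (ρ−1)·N`, i.e. the linear rate `L/(2N)`
is at most `(ρ−1)/(2ρ)`. -/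
theorem cds_linear_converse {V : Type} (F : Type) [Field F] [Fintype F]
    (L N LZ : ℕ) (hL : 0 < L) (hN : 0 < N) (hLZ : 0 < LZ)
    (I : CDSInstance V) (r : ℕ) (hr : rho I = (r : ℕ∞))
    (Fm : V → Matrix (Fin N) (Fin L) F) (Hm : V → Matrix (Fin N) (Fin LZ) F)
    (hscheme : IsLinearCDSScheme F L N LZ I Fm Hm) :
    r * L ≤ (r - 1) * N := by
  classical
  obtain ⟨hH, hCor, hSec⟩ := hscheme
  -- extract an optimal path, internal edge and connected cover
  have hr' : sInf {x : ℕ∞ | ∃ a b P, IsUnqualPath I P ∧ I.qual a b ∧ a ∈ P ∧ b ∈ P ∧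
      x = rhoEP I a b P} = (r : ℕ∞) := hr
  obtain ⟨a, b, P, hPath, hqab, haP, hbP, hrEP⟩ := CDSAux.sInf_mem_of_eq_coe hr'
  have hrEP' : sInf ((fun M : Finset (Sym2 V) => (M.card : ℕ∞)) ''
      {M | IsConnCover I a b P M}) = (r : ℕ∞) := hrEP.symm
  obtain ⟨M, hMcov, hMcard⟩ := CDSAux.sInf_mem_of_eq_coe hrEP'
  have hcard : M.card = r := by exact_mod_cast (show ((M.card : ℕ∞)) = (r : ℕ∞) from hMcard)
  obtain ⟨habM, hqual, hconn, hcover⟩ := hMcov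
  -- the intersection subspace for the special edge
  set ψ := CDSAux.psiMap (Fm a) (Fm b) (Hm a) (Hm b) (hH a) (hH b) with hψ
  have hsurjψ : Function.Surjective ψ :=
    CDSAux.psiMap_surj (Fm a) (Fm b) (Hm a) (Hm b) (hH a) (hH b) (hCor a b hqab)
  have hrange : Module.finrank F ↥(LinearMap.range ψ) = L := by
    rw [LinearMap.range_eq_top.mpr hsurjψ, finrank_top]
    simp [Module.finrank_pi]
  have hrn := LinearMap.finrank_range_add_finrank_ker ψ
  rw [hrange] at hrn
  -- every qualified edge has large intersection
  have hqL : ∀ e ∈ M, ∃ p q, e = s(p, q) ∧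
      L ≤ Module.finrank F ↥(rowSpan (Hm p) ⊓ rowSpan (Hm q)) := by
    intro e he
    obtain ⟨p, q, rfl, hpq⟩ := hqual e he
    refine ⟨p, q, rfl, ?_⟩
    have hsurj := CDSAux.psiMap_surj (Fm p) (Fm q) (Hm p) (Hm q) (hH p) (hH q)
      (hCor p q hpq)
    have h1 := LinearMap.finrank_range_add_finrank_ker
      (CDSAux.psiMap (Fm p) (Fm q) (Hm p) (Hm q) (hH p) (hH q))
    rw [LinearMap.range_eq_top.mpr hsurj, finrank_top] at h1
    simp only [Module.finrank_pi, Fintype.card_fin] at h1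
    omega
  -- dimension counting along the connected cover
  have hgrow := CDSAux.grow (fun v => rowSpan (Hm v)) M
    (fun v => by rw [CDSAux.finrank_rowSpan]; exact hH v) hqL hconn a b habM
  set DM : Submodule F (Fin LZ → F) :=
    ⨅ v ∈ {x : V | ∃ e ∈ M, x ∈ e}, rowSpan (Hm v) with hDM
  -- DM is contained in the special intersection
  have hDMa : DM ≤ rowSpan (Hm a) := by
    rw [hDM]; exact biInf_le _ ⟨s(a, b), habM, Sym2.mem_mk_left a b⟩
  have hDMb : DM ≤ rowSpan (Hm b) := by
    rw [hDM]; exact biInf_le _ ⟨s(a, b), habM, Sym2.mem_mk_right a b⟩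
  have hDMW : DM ≤ rowSpan (Hm a) ⊓ rowSpan (Hm b) := le_inf hDMa hDMb
  -- members of DM lie in the kernel of ψ
  have hmemDM : ∀ w ∈ DM, ∀ v, (∃ e ∈ M, v ∈ e) → w ∈ rowSpan (Hm v) := by
    intro w hw v hv
    rw [hDM] at hw
    simp only [Submodule.mem_iInf] at hw
    exact hw v hv
  have hker : ∀ (x : ↥(rowSpan (Hm a) ⊓ rowSpan (Hm b))), (x : Fin LZ → F) ∈ DM →
      ψ x = 0 := by
    intro x hx
    set w : Fin LZ → F := (x : Fin LZ → F) with hw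
    set f : V → (Fin L → F) := fun v =>
      if hv : w ∈ rowSpan (Hm v) then
        ((CDSAux.rEq (Hm v) (hH v)).symm ⟨w, hv⟩) ᵥ* (Fm v) else 0 with hf
    have hfeq : ∀ v u, I.unqual v u → w ∈ rowSpan (Hm v) → w ∈ rowSpan (Hm u) →
        f v = f u := by
      intro v u huv h1 h2
      rw [hf]
      simp only [dif_pos h1, dif_pos h2]
      exact CDSAux.sec_spec (Fm v) (Fm u) (Hm v) (Hm u) (hH v) (hH u)
        (hSec v u huv) w h1 h2
    have hmemP : ∀ v ∈ P, w ∈ rowSpan (Hm v) := by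
      intro v hv
      exact hmemDM w hx v (hcover v hv)
    have hfab : f a = f b :=
      CDSAux.chain_const I.unqual (fun v => w ∈ rowSpan (Hm v)) f hfeq
        P hPath.2.1 hmemP a haP b hbP
    rw [hψ, CDSAux.psiMap_apply]
    have h1 : f a = ((CDSAux.rEq (Hm a) (hH a)).symm ⟨w, x.2.1⟩) ᵥ* (Fm a) := by
      rw [hf]; exact dif_pos x.2.1
    have h2 : f b = ((CDSAux.rEq (Hm b) (hH b)).symm ⟨w, x.2.2⟩) ᵥ* (Fm b) := by
      rw [hf]; exact dif_pos x.2.2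
    rw [← h1, ← h2, hfab, sub_self]
  -- hence the dimension of DM is at most dim W - L
  have hKle : Submodule.comap (rowSpan (Hm a) ⊓ rowSpan (Hm b)).subtype DM ≤
      LinearMap.ker ψ := by
    rintro x hxK
    exact LinearMap.mem_ker.mpr (hker x hxK)
  have hKeq : Module.finrank F
      ↥(Submodule.comap (rowSpan (Hm a) ⊓ rowSpan (Hm b)).subtype DM) =
      Module.finrank F ↥DM :=
    (Submodule.comapSubtypeEquivOfLe hDMW).finrank_eq
  have hDMdim : Module.finrank F ↥DM ≤ Module.finrank F ↥(LinearMap.ker ψ) := by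
    rw [← hKeq]
    exact Submodule.finrank_mono hKle
  -- final arithmetic
  have hr1 : 1 ≤ r := by
    have : 0 < M.card := Finset.card_pos.mpr ⟨s(a, b), habM⟩
    omega
  have hfin : (L : ℤ) ≤ ((r : ℤ) - 1) * ((N : ℤ) - (L : ℤ)) := by
    rw [hcard] at hgrow
    have c1 : (Module.finrank F ↥DM : ℤ) ≤
        (Module.finrank F ↥(LinearMap.ker ψ) : ℤ) := by exact_mod_cast hDMdim
    have c2 : (L : ℤ) + (Module.finrank F ↥(LinearMap.ker ψ) : ℤ) =
        (Module.finrank F ↥(rowSpan (Hm a) ⊓ rowSpan (Hm b)) : ℤ) := by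
      exact_mod_cast hrn
    linarith [hgrow]
  have hgoal : (r : ℤ) * (L : ℤ) ≤ ((r : ℤ) - 1) * (N : ℤ) := by nlinarith [hfin]
  zify [hr1]
  exact hgoal
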